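/- arXiv:1911.05022 — 2 statements merged into one kernel-verified Lean document; each statement's English description precedes it below -/
import Mathlib

section
/- Assume there exist ρ > 0 and T ∈ (0,∞] such that P(X_s ≥ 0) ≤ ρ for all s < T. Then there is an absolute constant c > 0 (one may take c = exp(∫₁^∞ e^{-s} s^{-1} ds) when T < ∞, and c = 1 when T = ∞) such that κ(λz, 0) ≤ c λ^ρ κ(z, 0) for all λ > 1 and z ≥ 1/T, where κ(z,0) = exp(∫₀^∞ (e^{-s} - e^{-zs}) s^{-1} P(X_s ≥ 0) ds). -/
open MeasureTheory Set Real
open scoped ENNReal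

-- exp is 1-Lipschitz on nonpositive reals
lemma kw_exp_sub {a b : ℝ} (ha : 0 ≤ a) (hab : a ≤ b) :
    Real.exp (-a) - Real.exp (-b) ≤ b - a := by
  have h1 : 1 - (b - a) ≤ Real.exp (-(b - a)) := by
    have := Real.add_one_le_exp (-(b - a)); linarith
  have h2 : Real.exp (-b) = Real.exp (-a) * Real.exp (-(b - a)) := by
    rw [← Real.exp_add]; ring_nf
  have h3 : Real.exp (-a) ≤ 1 := Real.exp_le_one_iff.2 (by linarith)
  nlinarith [Real.exp_pos (-a)]

lemma kw_int1 {w a : ℝ} (hw : 0 < w) (ha : 0 < a) :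
    IntegrableOn (fun s => Real.exp (-(w * s)) / s) (Ioi a) := by
  have hbase : IntegrableOn (fun s => a⁻¹ * Real.exp (-w * s)) (Ioi a) :=
    (exp_neg_integrableOn_Ioi a hw).const_mul _
  refine hbase.mono' ?_ ?_
  · exact ((measurable_exp.comp (measurable_id.const_mul w).neg).div measurable_id).aestronglyMeasurable
  · filter_upwards [ae_restrict_mem measurableSet_Ioi] with s hs
    have hs' : a < s := hs
    have h1 : Real.exp (-(w * s)) / s ≤ Real.exp (-(w * s)) / a :=
      div_le_div_of_nonneg_left (Real.exp_pos _).le ha hs'.le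
    rw [Real.norm_eq_abs, abs_of_nonneg (div_nonneg (Real.exp_pos _).le (ha.trans hs').le)]
    calc Real.exp (-(w * s)) / s ≤ Real.exp (-(w * s)) / a := h1
    _ = a⁻¹ * Real.exp (-w * s) := by rw [neg_mul]; ring

lemma kw_h_meas (w : ℝ) :
    Measurable (fun s : ℝ => (Real.exp (-s) - Real.exp (-(w * s))) / s) :=
  ((measurable_exp.comp measurable_neg).sub
    (measurable_exp.comp (measurable_id.const_mul w).neg)).div measurable_id

lemma kw_h_int {w : ℝ} (hw : 0 < w) :
    IntegrableOn (fun s => (Real.exp (-s) - Real.exp (-(w * s))) / s) (Ioi 0) := by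
  rw [← Ioc_union_Ioi_eq_Ioi (zero_le_one' ℝ), integrableOn_union]
  constructor
  · -- bounded by |1 - w| on Ioc 0 1
    refine Integrable.mono' (g := fun _ : ℝ => |1 - w|)
      (integrableOn_const measure_Ioc_lt_top.ne)
      (kw_h_meas w).aestronglyMeasurable ?_
    filter_upwards [ae_restrict_mem measurableSet_Ioc] with s hs
    have hs0 : 0 < s := hs.1
    rw [Real.norm_eq_abs, abs_div, abs_of_pos hs0]
    rw [div_le_iff₀ hs0]
    have h1 : |Real.exp (-s) - Real.exp (-(w * s))| ≤ |s - w * s| := by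
      rcases le_total s (w * s) with h | h
      · rw [abs_of_nonneg (by
            have := Real.exp_le_exp.2 (neg_le_neg h); linarith),
          abs_of_nonpos (by linarith)]
        have := kw_exp_sub hs0.le h; linarith
      · rw [abs_of_nonpos (by
            have := Real.exp_le_exp.2 (neg_le_neg h); linarith),
          abs_of_nonneg (by linarith)]
        have := kw_exp_sub (by positivity : (0:ℝ) ≤ w * s) h; linarith
    calc |Real.exp (-s) - Real.exp (-(w * s))| ≤ |s - w * s| := h1
      _ = |1 - w| * s := by rw [show s - w * s = (1 - w) * s by ring, abs_mul, abs_of_pos hs0]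
      _ ≤ |1 - w| * s := le_rfl
  · -- dominated by exp(-s) + exp(-(w*s)) on Ioi 1
    have hbase : IntegrableOn (fun s => Real.exp (-1 * s) + Real.exp (-w * s)) (Ioi 1) :=
      (exp_neg_integrableOn_Ioi 1 one_pos).add (exp_neg_integrableOn_Ioi 1 hw)
    refine hbase.mono' (kw_h_meas w).aestronglyMeasurable ?_
    filter_upwards [ae_restrict_mem measurableSet_Ioi] with s hs
    have hs1 : (1:ℝ) < s := hs
    rw [Real.norm_eq_abs, abs_div, abs_of_pos (by linarith : (0:ℝ) < s)]
    rw [div_le_iff₀ (by linarith : (0:ℝ) < s)]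
    have h2 : |Real.exp (-s) - Real.exp (-(w * s))| ≤ Real.exp (-s) + Real.exp (-(w * s)) := by
      have := abs_sub (Real.exp (-s)) (Real.exp (-(w * s)))
      rw [abs_of_pos (Real.exp_pos _), abs_of_pos (Real.exp_pos _)] at this
      exact this
    calc |Real.exp (-s) - Real.exp (-(w * s))|
        ≤ Real.exp (-s) + Real.exp (-(w * s)) := h2
      _ = (Real.exp (-1 * s) + Real.exp (-w * s)) * 1 := by rw [neg_mul, one_mul, neg_mul, mul_one]
      _ ≤ (Real.exp (-1 * s) + Real.exp (-w * s)) * s := by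
          refine mul_le_mul_of_nonneg_left (by linarith) (by positivity)

lemma kw_change {w a : ℝ} (hw : 0 < w) (ha : 0 < a) :
    ∫ s in Ioi a, Real.exp (-(w * s)) / s = ∫ u in Ioi (w * a), Real.exp (-u) / u := by
  have h := integral_comp_mul_left_Ioi (fun u => Real.exp (-u) / u) a hw
  have h2 : ∀ s ∈ Ioi a, Real.exp (-(w * s)) / s = w * (Real.exp (-(w * s)) / (w * s)) := by
    intro s hs
    have hs0 : 0 < s := ha.trans hs
    field_simp
  rw [setIntegral_congr_fun measurableSet_Ioi h2, integral_const_mul, h, smul_eq_mul]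
  rw [← mul_assoc, mul_inv_cancel₀ hw.ne', one_mul]

lemma kw_E_int {a : ℝ} (ha : 0 < a) :
    IntegrableOn (fun u => Real.exp (-u) / u) (Ioi a) :=
  (kw_int1 one_pos ha).congr_fun (by intro s hs; simp) measurableSet_Ioi

lemma kw_tail_split {a b : ℝ} (ha : 0 < a) (hab : a ≤ b) :
    ∫ u in Ioi a, Real.exp (-u) / u
      = (∫ u in Ioc a b, Real.exp (-u) / u) + ∫ u in Ioi b, Real.exp (-u) / u := by
  have h1 : IntegrableOn (fun u => Real.exp (-u) / u) (Ioc a b) :=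
    (kw_E_int ha).mono_set Ioc_subset_Ioi_self
  rw [← Ioc_union_Ioi_eq_Ioi hab,
    setIntegral_union (Ioc_disjoint_Ioi le_rfl) measurableSet_Ioi h1
      (kw_E_int (ha.trans_le hab))]

lemma kw_frullani_eps {z l ε : ℝ} (hz : 0 < z) (hl : 1 < l) (hε : 0 < ε) :
    ∫ s in Ioi ε, (Real.exp (-(z * s)) - Real.exp (-(l * z * s))) / s ≤ Real.log l := by
  have hlz : 0 < l * z := by positivity
  have hsub : ∀ s ∈ Ioi ε, (Real.exp (-(z * s)) - Real.exp (-(l * z * s))) / s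
      = Real.exp (-(z * s)) / s - Real.exp (-(l * z * s)) / s := by
    intro s hs; rw [sub_div]
  rw [setIntegral_congr_fun measurableSet_Ioi hsub,
    integral_sub (kw_int1 hz hε) (kw_int1 hlz hε), kw_change hz hε, kw_change hlz hε]
  have hab : z * ε ≤ l * z * ε := by nlinarith [mul_pos hz hε]
  rw [kw_tail_split (by positivity) hab]
  have h1 : ∫ u in Ioc (z * ε) (l * z * ε), Real.exp (-u) / u
      ≤ ∫ u in Ioc (z * ε) (l * z * ε), 1 / u := by
    have hint : IntegrableOn (fun u => (1:ℝ) / u) (Ioc (z * ε) (l * z * ε)) := by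
      refine (ContinuousOn.integrableOn_compact isCompact_Icc ?_).mono_set Ioc_subset_Icc_self
      refine continuousOn_const.div continuousOn_id fun x hx => ?_
      exact (lt_of_lt_of_le (by positivity) hx.1).ne'
    refine setIntegral_mono_on ((kw_E_int (by positivity)).mono_set Ioc_subset_Ioi_self)
      hint measurableSet_Ioc fun u hu => ?_
    have hu0 : 0 < u := lt_of_lt_of_le (by positivity) hu.1.le
    exact (div_le_div_iff_of_pos_right hu0).2 (Real.exp_le_one_iff.2 (by linarith))
  have h2 : ∫ u in Ioc (z * ε) (l * z * ε), 1 / u = Real.log l := by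
    rw [← intervalIntegral.integral_of_le hab, integral_one_div ?h0]
    · rw [show l * z * ε / (z * ε) = l by field_simp]
    · intro h
      rcases (mem_uIcc.1 h) with ⟨h1, _⟩ | ⟨h1, _⟩ <;> nlinarith
  linarith [h1, h2]

lemma kw_g_int {z l : ℝ} (hz : 0 < z) (hl : 1 < l) :
    IntegrableOn (fun s => (Real.exp (-(z * s)) - Real.exp (-(l * z * s))) / s) (Ioi 0) := by
  have hlz : 0 < l * z := by positivity
  have h := (kw_h_int hlz).sub (kw_h_int hz)
  refine IntegrableOn.congr_fun h (fun s hs => ?_) measurableSet_Ioi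
  simp only [Pi.sub_apply]
  ring

lemma kw_frullani {z l : ℝ} (hz : 0 < z) (hl : 1 < l) :
    ∫ s in Ioi 0, (Real.exp (-(z * s)) - Real.exp (-(l * z * s))) / s ≤ Real.log l := by
  set g : ℝ → ℝ := fun s => (Real.exp (-(z * s)) - Real.exp (-(l * z * s))) / s with hgdef
  have hU : (⋃ n : ℕ, Ioi (((n : ℝ) + 1)⁻¹)) = Ioi (0 : ℝ) := by
    ext x
    simp only [mem_iUnion, mem_Ioi]
    constructor
    · rintro ⟨n, hn⟩
      exact lt_trans (by positivity) hn
    · intro hx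
      obtain ⟨n, hn⟩ := exists_nat_one_div_lt hx
      exact ⟨n, by rwa [one_div] at hn⟩
  have hmono : Monotone fun n : ℕ => Ioi (((n : ℝ) + 1)⁻¹) := by
    intro n m hnm
    refine Ioi_subset_Ioi (inv_anti₀ (by positivity) ?_)
    exact_mod_cast by omega
  have htend := tendsto_setIntegral_of_monotone (μ := volume) (f := g)
    (fun n : ℕ => measurableSet_Ioi) hmono (by rw [hU]; exact kw_g_int hz hl)
  rw [hU] at htend
  exact le_of_tendsto htend (Filter.Eventually.of_forall fun n =>
    kw_frullani_eps hz hl (by positivity))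

/-- If `P(X_s ≥ 0) ≤ ρ` for `s < T`, then `κ(λz,0) ≤ c λ^ρ κ(z,0)` for `λ > 1`
and `z ≥ 1/T`, with an absolute constant `c`. -/
theorem kappa_weak_scaling
    (P : ℝ → ℝ) (hPmeas : Measurable P) (hP0 : ∀ s, 0 ≤ P s) (hP1 : ∀ s, P s ≤ 1)
    (ρ : ℝ) (hρ : 0 < ρ) (T : ℝ≥0∞) (hT : 0 < T)
    (hPρ : ∀ s : ℝ, 0 < s → ENNReal.ofReal s < T → P s ≤ ρ) :
    ∃ c : ℝ, 0 < c ∧ ∀ l z : ℝ, 1 < l → 0 < z → T⁻¹ ≤ ENNReal.ofReal z →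
      Real.exp (∫ s in Ioi (0 : ℝ),
          (Real.exp (-s) - Real.exp (-(l * z * s))) / s * P s) ≤
        c * l ^ ρ *
          Real.exp (∫ s in Ioi (0 : ℝ),
            (Real.exp (-s) - Real.exp (-(z * s))) / s * P s) := by
  set C : ℝ := ∫ u in Ioi (1 : ℝ), Real.exp (-u) / u with hCdef
  have hC0 : 0 ≤ C :=
    setIntegral_nonneg measurableSet_Ioi fun u hu =>
      div_nonneg (Real.exp_pos _).le (le_trans zero_le_one hu.le)
  refine ⟨Real.exp C, Real.exp_pos C, fun l z hl hz hzT => ?_⟩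
  have hl0 : (0:ℝ) < l := lt_trans one_pos hl
  have hlz : 0 < l * z := by positivity
  -- integrability of the two main integrands
  have hFint : ∀ w : ℝ, 0 < w →
      IntegrableOn (fun s => (Real.exp (-s) - Real.exp (-(w * s))) / s * P s) (Ioi 0) := by
    intro w hw
    refine (kw_h_int hw).abs.mono' (((kw_h_meas w).mul hPmeas).aestronglyMeasurable) ?_
    filter_upwards with s
    rw [Real.norm_eq_abs, abs_mul]
    calc |(Real.exp (-s) - Real.exp (-(w * s))) / s| * |P s|
        ≤ |(Real.exp (-s) - Real.exp (-(w * s))) / s| * 1 := by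
          refine mul_le_mul_of_nonneg_left ?_ (abs_nonneg _)
          rw [abs_le]; exact ⟨by linarith [hP0 s, hP1 s], hP1 s⟩
      _ = |(Real.exp (-s) - Real.exp (-(w * s))) / s| := mul_one _
  have hGint : IntegrableOn
      (fun s => (Real.exp (-(z * s)) - Real.exp (-(l * z * s))) / s * P s) (Ioi 0) := by
    refine (kw_g_int hz hl).abs.mono'
      (((measurable_exp.comp (measurable_id.const_mul z).neg).sub
        (measurable_exp.comp (measurable_id.const_mul (l * z)).neg)).div measurable_id
        |>.mul hPmeas).aestronglyMeasurable ?_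
    filter_upwards with s
    rw [Real.norm_eq_abs, abs_mul]
    calc |(Real.exp (-(z * s)) - Real.exp (-(l * z * s))) / s| * |P s|
        ≤ |(Real.exp (-(z * s)) - Real.exp (-(l * z * s))) / s| * 1 := by
          refine mul_le_mul_of_nonneg_left ?_ (abs_nonneg _)
          rw [abs_le]; exact ⟨by linarith [hP0 s, hP1 s], hP1 s⟩
      _ = _ := mul_one _
  -- key decomposition
  have hkey : (∫ s in Ioi (0:ℝ), (Real.exp (-s) - Real.exp (-(l * z * s))) / s * P s)
      = (∫ s in Ioi (0:ℝ), (Real.exp (-s) - Real.exp (-(z * s))) / s * P s)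
        + ∫ s in Ioi (0:ℝ), (Real.exp (-(z * s)) - Real.exp (-(l * z * s))) / s * P s := by
    rw [← integral_add (hFint z hz) hGint]
    refine setIntegral_congr_fun measurableSet_Ioi fun s hs => ?_
    ring
  -- bound on the difference term
  have hgnonneg : ∀ s : ℝ, 0 < s →
      0 ≤ (Real.exp (-(z * s)) - Real.exp (-(l * z * s))) / s := by
    intro s hs
    have : Real.exp (-(l * z * s)) ≤ Real.exp (-(z * s)) := by
      refine Real.exp_le_exp.2 (neg_le_neg ?_)
      nlinarith [mul_pos hz hs]
    exact div_nonneg (by linarith) hs.le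
  have hρg_int : IntegrableOn
      (fun s => ρ * ((Real.exp (-(z * s)) - Real.exp (-(l * z * s))) / s)) (Ioi 0) :=
    (kw_g_int hz hl).const_mul ρ
  have hρgI : (∫ s in Ioi (0:ℝ), ρ * ((Real.exp (-(z * s)) - Real.exp (-(l * z * s))) / s))
      ≤ ρ * Real.log l := by
    rw [integral_const_mul]
    exact mul_le_mul_of_nonneg_left (kw_frullani hz hl) hρ.le
  have hD : (∫ s in Ioi (0:ℝ), (Real.exp (-(z * s)) - Real.exp (-(l * z * s))) / s * P s)
      ≤ ρ * Real.log l + C := by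
    rcases eq_or_ne T ⊤ with hTtop | hTne
    · -- T = ∞ : P ≤ ρ everywhere
      have h1 : (∫ s in Ioi (0:ℝ), (Real.exp (-(z * s)) - Real.exp (-(l * z * s))) / s * P s)
          ≤ ∫ s in Ioi (0:ℝ), ρ * ((Real.exp (-(z * s)) - Real.exp (-(l * z * s))) / s) := by
        refine setIntegral_mono_on hGint hρg_int measurableSet_Ioi fun s hs => ?_
        have hPs : P s ≤ ρ := hPρ s hs (by rw [hTtop]; exact ENNReal.ofReal_lt_top)
        have := hgnonneg s hs
        nlinarith
      linarith [h1, hρgI]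
    · -- T < ∞
      set t : ℝ := T.toReal with htdef
      have ht : 0 < t := ENNReal.toReal_pos hT.ne' hTne
      have hTt : T = ENNReal.ofReal t := (ENNReal.ofReal_toReal hTne).symm
      have hzt : 1 ≤ z * t := by
        have h1 : ENNReal.ofReal t⁻¹ ≤ ENNReal.ofReal z := by
          rw [ENNReal.ofReal_inv_of_pos ht, ← hTt]; exact hzT
        have h2 : t⁻¹ ≤ z := (ENNReal.ofReal_le_ofReal_iff hz.le).1 h1
        calc (1:ℝ) = t⁻¹ * t := (inv_mul_cancel₀ ht.ne').symm
          _ ≤ z * t := mul_le_mul_of_nonneg_right h2 ht.le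
      have hsplit : Ioo (0:ℝ) t ∪ Ici t = Ioi (0:ℝ) := Ioo_union_Ici_eq_Ioi ht
      have hIciSub : Ici t ⊆ Ioi (0:ℝ) := fun x hx => lt_of_lt_of_le ht hx
      have hIooSub : Ioo (0:ℝ) t ⊆ Ioi (0:ℝ) := fun x hx => hx.1
      have hsplitInt : (∫ s in Ioi (0:ℝ),
            (Real.exp (-(z * s)) - Real.exp (-(l * z * s))) / s * P s)
          = (∫ s in Ioo (0:ℝ) t,
              (Real.exp (-(z * s)) - Real.exp (-(l * z * s))) / s * P s)
            + ∫ s in Ici t,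
              (Real.exp (-(z * s)) - Real.exp (-(l * z * s))) / s * P s := by
        have hdisj : Disjoint (Ioo (0:ℝ) t) (Ici t) :=
          disjoint_left.2 fun x hx hx' => absurd hx' (not_le.2 hx.2)
        rw [← hsplit, setIntegral_union hdisj measurableSet_Ici
          (hGint.mono_set hIooSub) (hGint.mono_set hIciSub)]
      -- first piece
      have hpiece1 : (∫ s in Ioo (0:ℝ) t,
            (Real.exp (-(z * s)) - Real.exp (-(l * z * s))) / s * P s)
          ≤ ρ * Real.log l := by
        have h1 : (∫ s in Ioo (0:ℝ) t,
              (Real.exp (-(z * s)) - Real.exp (-(l * z * s))) / s * P s)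
            ≤ ∫ s in Ioo (0:ℝ) t,
              ρ * ((Real.exp (-(z * s)) - Real.exp (-(l * z * s))) / s) := by
          refine setIntegral_mono_on (hGint.mono_set hIooSub) (hρg_int.mono_set hIooSub)
            measurableSet_Ioo fun s hs => ?_
          have hPs : P s ≤ ρ := hPρ s hs.1 (by
            rw [hTt]; exact (ENNReal.ofReal_lt_ofReal_iff ht).2 hs.2)
          have := hgnonneg s hs.1
          nlinarith
        have h2 : (∫ s in Ioo (0:ℝ) t,
              ρ * ((Real.exp (-(z * s)) - Real.exp (-(l * z * s))) / s))
            ≤ ∫ s in Ioi (0:ℝ),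
              ρ * ((Real.exp (-(z * s)) - Real.exp (-(l * z * s))) / s) := by
          refine setIntegral_mono_set hρg_int ?_ hIooSub.eventuallyLE
          filter_upwards [ae_restrict_mem measurableSet_Ioi] with s hs
          exact mul_nonneg hρ.le (hgnonneg s hs)
        linarith [h1, h2, hρgI]
      -- second piece
      have hpiece2 : (∫ s in Ici t,
            (Real.exp (-(z * s)) - Real.exp (-(l * z * s))) / s * P s) ≤ C := by
        have htail_int : IntegrableOn (fun s => Real.exp (-(z * s)) / s) (Ici t) :=
          (integrableOn_Ici_iff_integrableOn_Ioi enorm_ne_top).2 (kw_int1 hz ht)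
        have h1 : (∫ s in Ici t,
              (Real.exp (-(z * s)) - Real.exp (-(l * z * s))) / s * P s)
            ≤ ∫ s in Ici t, Real.exp (-(z * s)) / s := by
          refine setIntegral_mono_on (hGint.mono_set hIciSub) htail_int
            measurableSet_Ici fun s hs => ?_
          have hs0 : 0 < s := lt_of_lt_of_le ht hs
          have hg0 := hgnonneg s hs0
          have hB : (Real.exp (-(z * s)) - Real.exp (-(l * z * s))) / s
              ≤ Real.exp (-(z * s)) / s := by
            refine (div_le_div_iff_of_pos_right hs0).2 ?_
            linarith [Real.exp_pos (-(l * z * s))]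
          calc (Real.exp (-(z * s)) - Real.exp (-(l * z * s))) / s * P s
              ≤ (Real.exp (-(z * s)) - Real.exp (-(l * z * s))) / s * 1 :=
                mul_le_mul_of_nonneg_left (hP1 s) hg0
            _ = (Real.exp (-(z * s)) - Real.exp (-(l * z * s))) / s := mul_one _
            _ ≤ Real.exp (-(z * s)) / s := hB
        have h2 : (∫ s in Ici t, Real.exp (-(z * s)) / s)
            = ∫ u in Ioi (z * t), Real.exp (-u) / u := by
          rw [integral_Ici_eq_integral_Ioi, kw_change hz ht]
        have h3 : (∫ u in Ioi (z * t), Real.exp (-u) / u) ≤ C := by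
          refine setIntegral_mono_set (kw_E_int one_pos) ?_
            (Ioi_subset_Ioi hzt).eventuallyLE
          filter_upwards [ae_restrict_mem measurableSet_Ioi] with u hu
          have : (0:ℝ) < u := lt_trans one_pos hu
          positivity
        linarith [h1, h2.le, h2.ge, h3]
      linarith [hsplitInt.le, hsplitInt.ge, hpiece1, hpiece2]
  -- conclude
  rw [hkey, Real.rpow_def_of_pos hl0, ← Real.exp_add, ← Real.exp_add]
  exact Real.exp_le_exp.2 (by nlinarith [hD])
end

section
/- Let X be a Lévy process, x ∈ ℝ, R > 0, with 0 < x < R, and let τ = inf{t > 0 : X_t ∉ (0,R)}. Assume the identity E^x[∫₀^∞ f(X_t) dt] = ∫₀^∞ V(dy) ∫₀^x V̂(dz) f(x + y - z) holds for every measurable f : ℝ → [0,∞) (with f vanishing off [0,∞) in the relevant sense), where V, V̂ are the renewal functions of the ascending and descending ladder height processes. Then E^x τ ≤ V(R) V̂(x). -/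
open MeasureTheory Set
open scoped ENNReal

/-- If the occupation-time identity
`E^x ∫₀^∞ f(X_t) dt = ∫₀^∞ V(dy) ∫₀^x V̂(dz) f(x+y-z)` holds, then the expected
exit time of `(0,R)` started at `x ∈ (0,R)` is at most `V(R) V̂(x)`. -/
theorem exit_time_upper_bound
    {Ω : Type*} [MeasurableSpace Ω] (P : Measure Ω) [IsProbabilityMeasure P]
    (X : ℝ → Ω → ℝ) (τ : Ω → ℝ) (hτ : ∀ ω, 0 ≤ τ ω)
    (x R : ℝ) (hx : 0 < x) (hxR : x < R)
    (V Vhat : StieltjesFunction ℝ) (hV0 : V 0 = 0) (hVhat0 : Vhat 0 = 0)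
    (hVneg : ∀ y : ℝ, y < 0 → V y = 0) (hVhatneg : ∀ y : ℝ, y < 0 → Vhat y = 0)
    (hin : ∀ ω, ∀ t : ℝ, 0 ≤ t → t < τ ω → X t ω ∈ Icc 0 R)
    (hocc : ∀ f : ℝ → ℝ≥0∞, Measurable f →
      (∫⁻ ω, ∫⁻ t in Ioi (0 : ℝ), f (X t ω) ∂volume ∂P) =
        ∫⁻ y in Ici (0 : ℝ), (∫⁻ z in Icc (0 : ℝ) x, f (x + y - z) ∂Vhat.measure)
          ∂V.measure) :
    (∫⁻ ω, ENNReal.ofReal (τ ω) ∂P) ≤ ENNReal.ofReal (V R * Vhat x) := by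
  set f : ℝ → ℝ≥0∞ := (Icc (0:ℝ) R).indicator 1 with hfdef
  have hfm : Measurable f := measurable_const.indicator measurableSet_Icc
  have hfle : ∀ u : ℝ, f u ≤ 1 := by
    intro u
    by_cases h : u ∈ Icc (0:ℝ) R <;> simp [hfdef, indicator, h]
  have key := hocc f hfm
  -- lower bound for LHS
  have hL : (∫⁻ ω, ENNReal.ofReal (τ ω) ∂P) ≤
      ∫⁻ ω, ∫⁻ t in Ioi (0 : ℝ), f (X t ω) ∂volume ∂P := by
    refine lintegral_mono fun ω => ?_
    calc ENNReal.ofReal (τ ω)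
        = ∫⁻ t in Ioo (0:ℝ) (τ ω), f (X t ω) ∂volume := by
          have heq : ∀ t ∈ Ioo (0:ℝ) (τ ω), f (X t ω) = 1 := fun t ht => by
            have := hin ω t (le_of_lt ht.1) ht.2
            simp [hfdef, indicator, this]
          rw [setLIntegral_congr_fun measurableSet_Ioo
            heq]
          simp [Real.volume_Ioo]
      _ ≤ ∫⁻ t in Ioi (0:ℝ), f (X t ω) ∂volume :=
          lintegral_mono_set Ioo_subset_Ioi_self
  rw [key] at hL
  -- upper bound for RHS
  set C : ℝ≥0∞ := Vhat.measure (Icc (0:ℝ) x) with hC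
  have hVhatC : C ≤ ENNReal.ofReal (Vhat x) := by
    calc C ≤ Vhat.measure (Ioc (-1 : ℝ) x) :=
        measure_mono (fun z hz => ⟨lt_of_lt_of_le (by norm_num) hz.1, hz.2⟩)
      _ = ENNReal.ofReal (Vhat x - Vhat (-1)) := Vhat.measure_Ioc _ _
      _ = ENNReal.ofReal (Vhat x) := by rw [hVhatneg (-1) (by norm_num)]; ring_nf
  have hVC : V.measure (Icc (0:ℝ) R) ≤ ENNReal.ofReal (V R) := by
    calc V.measure (Icc (0:ℝ) R) ≤ V.measure (Ioc (-1 : ℝ) R) :=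
        measure_mono (fun z hz => ⟨lt_of_lt_of_le (by norm_num) hz.1, hz.2⟩)
      _ = ENNReal.ofReal (V R - V (-1)) := V.measure_Ioc _ _
      _ = ENNReal.ofReal (V R) := by rw [hVneg (-1) (by norm_num)]; ring_nf
  have hinner_le : ∀ y : ℝ,
      (∫⁻ z in Icc (0:ℝ) x, f (x + y - z) ∂Vhat.measure) ≤ C := by
    intro y
    calc (∫⁻ z in Icc (0:ℝ) x, f (x + y - z) ∂Vhat.measure)
        ≤ ∫⁻ _ in Icc (0:ℝ) x, 1 ∂Vhat.measure :=
          lintegral_mono fun z => hfle _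
      _ = C := by simp [hC]
  have hinner_zero : ∀ y : ℝ, R < y →
      (∫⁻ z in Icc (0:ℝ) x, f (x + y - z) ∂Vhat.measure) = 0 := by
    intro y hy
    have heq : ∀ z ∈ Icc (0:ℝ) x, f (x + y - z) = 0 := fun z hz => by
      have h2 : R < x + y - z := by have := hz.2; linarith
      simp [hfdef, indicator, not_le.mpr h2]
    rw [setLIntegral_congr_fun measurableSet_Icc
      heq]
    simp
  have hR : (∫⁻ y in Ici (0 : ℝ),
      (∫⁻ z in Icc (0 : ℝ) x, f (x + y - z) ∂Vhat.measure) ∂V.measure)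
      ≤ V.measure (Icc (0:ℝ) R) * C := by
    calc (∫⁻ y in Ici (0 : ℝ),
        (∫⁻ z in Icc (0 : ℝ) x, f (x + y - z) ∂Vhat.measure) ∂V.measure)
        ≤ ∫⁻ y in Ici (0 : ℝ), (Icc (0:ℝ) R).indicator (fun _ => C) y ∂V.measure := by
          refine setLIntegral_mono' measurableSet_Ici fun y hy => ?_
          by_cases h : y ∈ Icc (0:ℝ) R
          · simpa [indicator, h] using hinner_le y
          · have : R < y := by
              rcases not_and_or.mp h with h1 | h2
              · exact absurd hy h1
              · exact not_le.mp h2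
            simp [indicator, h, hinner_zero y this]
      _ = C * V.measure (Icc (0:ℝ) R ∩ Ici 0) := by
          rw [lintegral_indicator measurableSet_Icc]
          simp [Measure.restrict_restrict, measurableSet_Icc, mul_comm]
      _ = V.measure (Icc (0:ℝ) R) * C := by
          rw [mul_comm]
          congr 1
          rw [inter_eq_left.mpr (fun z hz => hz.1)]
  have hVR0 : 0 ≤ V R := by
    rw [← hV0]; exact V.mono (le_of_lt (lt_trans hx hxR))
  calc (∫⁻ ω, ENNReal.ofReal (τ ω) ∂P)
      ≤ V.measure (Icc (0:ℝ) R) * C := le_trans hL hR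
    _ ≤ ENNReal.ofReal (V R) * ENNReal.ofReal (Vhat x) := mul_le_mul' hVC hVhatC
    _ = ENNReal.ofReal (V R * Vhat x) := (ENNReal.ofReal_mul hVR0).symm
end
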